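/- Let Φ be a positive unital linear map from a commutative *-subalgebra A of M_m(ℂ) to M_n(ℂ). Then there exist a finite-dimensional Hilbert space F containing ℂⁿ (with dim F ≤ nm) and a unital *-homomorphism π : A → L(F) such that for all X in A, Φ(X) equals the compression of π(X) to ℂⁿ. -/

import Mathlib

open Matrix
open scoped ComplexOrder Kronecker

/-- Functional calculus for Hermitian matrices: apply `f : ℝ → ℝ` to the eigenvalues in a
spectral decomposition (junk value `0` if the matrix is not Hermitian). -/
noncomputable def hermCFC {ι : Type*} [Fintype ι] [DecidableEq ι]
    (M : Matrix ι ι ℂ) (f : ℝ → ℝ) : Matrix ι ι ℂ :=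
  if h : M.IsHermitian then h.cfc f else 0

/-- Eigenvalues of a Hermitian matrix listed in decreasing order:
`eigDesc M j` is the `(j+1)`-th largest eigenvalue (junk value `0` if not Hermitian). -/
noncomputable def eigDesc {n : ℕ} (M : Matrix (Fin n) (Fin n) ℂ) : Fin n → ℝ :=
  if h : M.IsHermitian then fun j => h.eigenvalues (Tuple.sort h.eigenvalues j.rev) else 0

/-- Eigenvalues of a Hermitian matrix listed in increasing order:
`eigAsc M j` is the `(j+1)`-th smallest eigenvalue (junk value `0` if not Hermitian). -/
noncomputable def eigAsc {n : ℕ} (M : Matrix (Fin n) (Fin n) ℂ) : Fin n → ℝ :=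
  if h : M.IsHermitian then fun j => h.eigenvalues (Tuple.sort h.eigenvalues j) else 0

/-- The absolute value `|X| = (XᴴX)^(1/2)` of a matrix. -/
noncomputable def matAbs {n : ℕ} (X : Matrix (Fin n) (Fin n) ℂ) : Matrix (Fin n) (Fin n) ℂ :=
  (Matrix.posSemidef_conjTranspose_mul_self X).1.eigenvectorUnitary.1 *
    diagonal ((↑) ∘ (Real.sqrt ∘ (Matrix.posSemidef_conjTranspose_mul_self X).1.eigenvalues)) *
    (star (Matrix.posSemidef_conjTranspose_mul_self X).1.eigenvectorUnitary : Matrix (Fin n) (Fin n) ℂ)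

/-- The Loewner order: `X ≤ Y` iff `Y - X` is positive semidefinite. -/
def loewnerLE {n : ℕ} (X Y : Matrix (Fin n) (Fin n) ℂ) : Prop := (Y - X).PosSemidef

private lemma herm_nilp {m : ℕ} (y : Matrix (Fin m) (Fin m) ℂ) (hy : yᴴ = y) :
    ∀ N : ℕ, y ^ (N + 1) = 0 → y = 0 := by
  intro N
  induction N with
  | zero => simp
  | succ N ih =>
    intro h
    apply ih
    have key : (y ^ (N + 1))ᴴ * y ^ (N + 1) = 0 := by
      rw [conjTranspose_pow, hy, ← pow_add]
      have : N + 1 + (N + 1) = (N + 2) + N := by ring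
      rw [this, pow_add, h, zero_mul]
    exact conjTranspose_mul_self_eq_zero.mp key

set_option maxHeartbeats 2000000 in
set_option synthInstance.maxHeartbeats 1000000 in
private lemma stepA {m : ℕ} (S : StarSubalgebra ℂ (Matrix (Fin m) (Fin m) ℂ))
    (hcomm : ∀ x y : S, x * y = y * x) :
    ∃ (k : ℕ), k ≤ m ∧ ∃ (χ : Fin k → S → ℂ) (E : Fin k → S),
      (∀ i, ((E i : S) : Matrix (Fin m) (Fin m) ℂ).PosSemidef) ∧
      (∀ x : S, x = ∑ i, χ i x • E i) ∧
      (∀ i, χ i 1 = 1) ∧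
      (∀ i x y, χ i (x * y) = χ i x * χ i y) ∧
      (∀ i (c : ℂ) (x : S), χ i (c • x) = c * χ i x) ∧
      (∀ i (x y : S), χ i (x + y) = χ i x + χ i y) ∧
      (∀ i x, χ i (star x) = starRingEnd ℂ (χ i x)) := by
  classical
  letI : CommRing S := { (inferInstance : Ring S) with mul_comm := hcomm }
  haveI : FiniteDimensional ℂ S :=
    FiniteDimensional.finiteDimensional_submodule (Subalgebra.toSubmodule S.toSubalgebra)
  haveI : IsArtinianRing S := isArtinian_of_tower ℂ inferInstance
  -- coercion facts
  have hcm : ∀ x y : S, ((x * y : S) : Matrix (Fin m) (Fin m) ℂ) = (x : _) * (y : _) :=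
    fun _ _ => rfl
  have hcs : ∀ x : S, ((star x : S) : Matrix (Fin m) (Fin m) ℂ) = (x : _)ᴴ := fun _ => rfl
  have hcpow : ∀ (y : S) (N : ℕ), ((y ^ N : S) : Matrix (Fin m) (Fin m) ℂ) = (y : _) ^ N := by
    intro y N
    induction N with
    | zero => rfl
    | succ N ih => rw [pow_succ, pow_succ, ← ih]; rfl
  haveI : IsReduced S := by
    constructor
    rintro x ⟨N, hN⟩
    rcases Nat.eq_zero_or_pos N with h0 | hpos
    · subst h0
      rw [pow_zero] at hN
      have h1 : (1 : S) = 0 := hN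
      calc x = x * 1 := by rw [mul_one]
        _ = 0 := by rw [h1, mul_zero]
    · obtain ⟨N', rfl⟩ : ∃ N', N = N' + 1 := ⟨N - 1, (Nat.succ_pred_eq_of_pos hpos).symm⟩
      set z : S := star x * x with hz
      have hzN : z ^ (N' + 1) = 0 := by
        rw [hz, mul_pow, ← star_pow, hN, star_zero, zero_mul]
      have hzH : ((z : S) : Matrix (Fin m) (Fin m) ℂ)ᴴ = (z : _) := by
        rw [← hcs]
        congr 1
        rw [hz, StarMul.star_mul, star_star, mul_comm]
      have hzm : ((z : S) : Matrix (Fin m) (Fin m) ℂ) = 0 := by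
        apply herm_nilp _ hzH N'
        rw [← hcpow, hzN]; rfl
      have hz0 : (x : Matrix (Fin m) (Fin m) ℂ)ᴴ * (x : _) = 0 := by
        rw [← hcs x, ← hcm, ← hz, hzm]
      have : (x : Matrix (Fin m) (Fin m) ℂ) = 0 := conjTranspose_mul_self_eq_zero.mp hz0
      exact Subtype.ext this
  haveI := (IsArtinianRing.setOfPred_isMaximal_finite S).to_subtype
  haveI : Fintype (MaximalSpectrum S) := Fintype.ofFinite _
  set Om := MaximalSpectrum S with hOm
  set e := IsArtinianRing.equivPi S with he_def
  have he : ∀ (x : S) (J : Om), e x J = Ideal.Quotient.mk J.1 x := fun _ _ => rfl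
  -- characters
  have hbij : ∀ J : Om, Function.Bijective (algebraMap ℂ (S ⧸ J.1)) := by
    intro J
    haveI : J.1.IsMaximal := J.2
    haveI : Nontrivial (S ⧸ J.1) := Ideal.Quotient.nontrivial_iff.mpr (Ideal.IsMaximal.ne_top ‹_›)
    haveI : Module.Finite ℂ (S ⧸ J.1) :=
      Module.Finite.of_surjective (Ideal.Quotient.mkₐ ℂ J.1).toLinearMap
        (Ideal.Quotient.mkₐ_surjective ℂ J.1)
    haveI : Algebra.IsIntegral ℂ (S ⧸ J.1) := Algebra.IsIntegral.of_finite ℂ _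
    exact ⟨RingHom.injective _, IsAlgClosed.algebraMap_bijective_of_isIntegral.2⟩
  set ch : Om → S → ℂ :=
    fun J x => Function.invFun (algebraMap ℂ (S ⧸ J.1)) (Ideal.Quotient.mk J.1 x) with hch_def
  have hch : ∀ (J : Om) (x : S), algebraMap ℂ (S ⧸ J.1) (ch J x) = Ideal.Quotient.mk J.1 x :=
    fun J x => Function.invFun_eq ((hbij J).2 _)
  have hinj : ∀ J : Om, Function.Injective (algebraMap ℂ (S ⧸ J.1)) := fun J => (hbij J).1
  have halg : ∀ (J : Om) (c : ℂ),
      Ideal.Quotient.mk J.1 (algebraMap ℂ S c) = algebraMap ℂ (S ⧸ J.1) c := fun _ _ => rfl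
  -- idempotents
  set k := Fintype.card Om with hk_def
  set g : Fin k ≃ Om := (Fintype.equivFin Om).symm with hg_def
  set E : Fin k → S := fun i => e.symm (Pi.single (g i) 1) with hE_def
  have heE : ∀ i, e (E i) = Pi.single (g i) 1 := fun i => e.apply_symm_apply _
  have heEval : ∀ (i : Fin k) (J : Om), e (E i) J = if J = g i then 1 else 0 := by
    intro i J
    rw [heE]
    by_cases h : J = g i
    · subst h; rw [Pi.single_eq_same, if_pos rfl]
    · rw [Pi.single_eq_of_ne h, if_neg h]
  -- x * E i = ch (g i) x • E i
  have hsmulE : ∀ (c : ℂ) (y : S) (J : Om), e (c • y) J = algebraMap ℂ (S ⧸ J.1) c * e y J := by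
    intro c y J
    rw [Algebra.smul_def, _root_.map_mul]
    rfl
  have hxE : ∀ (x : S) (i : Fin k), x * E i = ch (g i) x • E i := by
    intro x i
    apply e.injective
    funext J
    rw [_root_.map_mul, Pi.mul_apply, hsmulE, heEval]
    by_cases h : J = g i
    · subst h
      rw [if_pos rfl, mul_one, mul_one, hch, he]
    · rw [if_neg h, mul_zero, mul_zero]
  have hEsq : ∀ i, E i * E i = E i := by
    intro i
    apply e.injective
    funext J
    rw [_root_.map_mul, Pi.mul_apply, heEval]
    by_cases h : J = g i <;> simp [h]
  have hEmul : ∀ i j, i ≠ j → E i * E j = 0 := by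
    intro i j hij
    apply e.injective
    funext J
    rw [_root_.map_mul, Pi.mul_apply, _root_.map_zero, Pi.zero_apply, heEval, heEval]
    by_cases h : J = g i
    · rw [if_pos h, one_mul, if_neg, ]
      rw [h]
      exact fun hc => hij (g.injective hc)
    · rw [if_neg h, zero_mul]
  have hEsum : (∑ i, E i) = 1 := by
    apply e.injective
    funext J
    rw [_root_.map_sum, _root_.map_one, Finset.sum_apply, Pi.one_apply]
    simp only [heEval]
    rw [Finset.sum_eq_single (g.symm J)]
    · rw [if_pos (g.apply_symm_apply J).symm]
    · intro i _ hi
      rw [if_neg]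
      intro hc
      exact hi (by rw [hc, Equiv.symm_apply_apply])
    · intro h; exact absurd (Finset.mem_univ _) h
  have hEne : ∀ i, E i ≠ 0 := by
    intro i hEi
    haveI : (g i).1.IsMaximal := (g i).2
    haveI : Nontrivial (S ⧸ (g i).1) := Ideal.Quotient.nontrivial_iff.mpr (Ideal.IsMaximal.ne_top ‹_›)
    have := heEval i (g i)
    rw [hEi, _root_.map_zero, if_pos rfl] at this
    simp at this
  have hdecomp : ∀ x : S, x = ∑ i, ch (g i) x • E i := by
    intro x
    apply e.injective
    funext J
    rw [_root_.map_sum, Finset.sum_apply]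
    have : ∀ i : Fin k, e (ch (g i) x • E i) J =
        if J = g i then algebraMap ℂ (S ⧸ J.1) (ch (g i) x) else 0 := by
      intro i
      rw [hsmulE, heEval]
      by_cases h : J = g i
      · rw [if_pos h, if_pos h, mul_one]
      · rw [if_neg h, if_neg h, mul_zero]
    simp only [this]
    rw [Finset.sum_eq_single (g.symm J)]
    · rw [if_pos (g.apply_symm_apply J).symm, he]
      have h2 : g (g.symm J) = J := g.apply_symm_apply J
      rw [h2, hch]
    · intro i _ hi
      rw [if_neg]
      intro hc
      exact hi (by rw [hc, Equiv.symm_apply_apply])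
    · intro h; exact absurd (Finset.mem_univ _) h
  have hcsm : ∀ (c : ℂ) (y : S), ((c • y : S) : Matrix (Fin m) (Fin m) ℂ) = c • (y : Matrix (Fin m) (Fin m) ℂ) :=
    fun _ _ => rfl
  have hnormal : ∀ i, ((E i : S) : Matrix (Fin m) (Fin m) ℂ) * ((E i : S) : Matrix (Fin m) (Fin m) ℂ)ᴴ
      = ((E i : S) : Matrix (Fin m) (Fin m) ℂ)ᴴ * ((E i : S) : Matrix (Fin m) (Fin m) ℂ) := by
    intro i
    rw [← hcs, ← hcm, ← hcm, hcomm (E i) (star (E i))]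
  have hPP : ∀ i, ((E i : S) : Matrix (Fin m) (Fin m) ℂ) * ((E i : S) : Matrix (Fin m) (Fin m) ℂ) = ((E i : S) : Matrix (Fin m) (Fin m) ℂ) := by
    intro i; rw [← hcm, hEsq]
  have hEmat : ∀ i, ((E i : S) : Matrix (Fin m) (Fin m) ℂ)ᴴ * ((E i : S) : Matrix (Fin m) (Fin m) ℂ)
      = ((E i : S) : Matrix (Fin m) (Fin m) ℂ) := by
    intro i
    set P : Matrix (Fin m) (Fin m) ℂ := ((E i : S) : Matrix (Fin m) (Fin m) ℂ) with hP_def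
    have h1 : P * P = P := hPP i
    have h2 : P * Pᴴ = Pᴴ * P := hnormal i
    have e1 : P * (Pᴴ * P) = Pᴴ * P := by
      rw [← mul_assoc, h2, mul_assoc, h1]
    have e2 : (Pᴴ * P) * P = Pᴴ * P := by rw [mul_assoc, h1]
    have e3 : (Pᴴ * P) * (Pᴴ * P) = Pᴴ * (Pᴴ * P) := by rw [mul_assoc P.conjTranspose, e1]
    have key : (P - Pᴴ * P)ᴴ * (P - Pᴴ * P) = 0 := by
      have hct : (P - Pᴴ * P)ᴴ = Pᴴ - Pᴴ * P := by
        rw [conjTranspose_sub, conjTranspose_mul, conjTranspose_conjTranspose]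
      rw [hct, Matrix.sub_mul, Matrix.mul_sub, Matrix.mul_sub, e2, e3, sub_self]
    have := conjTranspose_mul_self_eq_zero.mp key
    rw [sub_eq_zero] at this
    exact this.symm
  have hEherm : ∀ i, ((E i : S) : Matrix (Fin m) (Fin m) ℂ)ᴴ = ((E i : S) : Matrix (Fin m) (Fin m) ℂ) := by
    intro i
    calc ((E i : S) : Matrix (Fin m) (Fin m) ℂ)ᴴ
        = (((E i : S) : Matrix (Fin m) (Fin m) ℂ)ᴴ * ((E i : S) : Matrix (Fin m) (Fin m) ℂ))ᴴ := by rw [hEmat i]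
      _ = ((E i : S) : Matrix (Fin m) (Fin m) ℂ)ᴴ * ((E i : S) : Matrix (Fin m) (Fin m) ℂ) := by
          rw [conjTranspose_mul, conjTranspose_conjTranspose]
      _ = ((E i : S) : Matrix (Fin m) (Fin m) ℂ) := hEmat i
  have hEpsd : ∀ i, ((E i : S) : Matrix (Fin m) (Fin m) ℂ).PosSemidef := by
    intro i
    rw [← hEmat i]
    exact posSemidef_conjTranspose_mul_self _
  have hPne : ∀ i, ((E i : S) : Matrix (Fin m) (Fin m) ℂ) ≠ 0 := by
    intro i h
    exact hEne i (Subtype.ext h)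
  have hstar : ∀ (i : Fin k) (x : S), ch (g i) (star x) = starRingEnd ℂ (ch (g i) x) := by
    intro i x
    set P : Matrix (Fin m) (Fin m) ℂ := ((E i : S) : Matrix (Fin m) (Fin m) ℂ) with hP_def
    have hXP : (x : Matrix (Fin m) (Fin m) ℂ) * P = ch (g i) x • P := by
      rw [← hcm, hxE x i, hcsm]
    have hXsP : (x : Matrix (Fin m) (Fin m) ℂ)ᴴ * P = ch (g i) (star x) • P := by
      rw [← hcs, ← hcm, hxE (star x) i, hcsm]
    have h3 : P * (x : Matrix (Fin m) (Fin m) ℂ)ᴴ = starRingEnd ℂ (ch (g i) x) • P := by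
      have h := congrArg conjTranspose hXP
      rw [conjTranspose_mul, conjTranspose_smul, hEherm i] at h
      rw [h]
      rfl
    have h4 : (x : Matrix (Fin m) (Fin m) ℂ)ᴴ * P = P * (x : Matrix (Fin m) (Fin m) ℂ)ᴴ := by
      rw [← hcs, ← hcm, ← hcm, hcomm]
    have h6 : (ch (g i) (star x) - starRingEnd ℂ (ch (g i) x)) • P = 0 := by
      rw [sub_smul, ← hXsP, h4, h3, sub_self]
    rcases smul_eq_zero.mp h6 with h | h
    · exact sub_eq_zero.mp h
    · exact absurd h (hPne i)
  have hkm : k ≤ m := by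
    have hvec : ∀ i, ∃ wv : Fin m → ℂ, ((E i : S) : Matrix (Fin m) (Fin m) ℂ) *ᵥ wv ≠ 0 := by
      intro i
      by_contra hno
      push_neg at hno
      apply hPne i
      ext r c
      have h0 := congr_fun (hno (Pi.single c 1)) r
      simpa [Matrix.mulVec_single] using h0
    choose wv hwv using hvec
    set v : Fin k → (Fin m → ℂ) := fun i => ((E i : S) : Matrix (Fin m) (Fin m) ℂ) *ᵥ (wv i)
      with hv_def
    have hEv : ∀ j i, ((E j : S) : Matrix (Fin m) (Fin m) ℂ) *ᵥ (v i)
        = if i = j then v j else 0 := by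
      intro j i
      rw [hv_def]
      simp only
      rw [mulVec_mulVec, ← hcm]
      by_cases h : i = j
      · subst h; rw [hEsq, if_pos rfl]
      · rw [hEmul j i (fun hc => h hc.symm), if_neg h]
        show ((0 : S) : Matrix (Fin m) (Fin m) ℂ) *ᵥ (wv i) = 0
        rw [show ((0 : S) : Matrix (Fin m) (Fin m) ℂ) = 0 from rfl, zero_mulVec]
    have hli : LinearIndependent ℂ v := by
      rw [Fintype.linearIndependent_iff]
      intro gg hgg j
      have happ := congrArg (fun z => ((E j : S) : Matrix (Fin m) (Fin m) ℂ) *ᵥ z) hgg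
      simp only [mulVec_zero] at happ
      have hlin : ((E j : S) : Matrix (Fin m) (Fin m) ℂ) *ᵥ (∑ i, gg i • v i)
          = ∑ i, gg i • (((E j : S) : Matrix (Fin m) (Fin m) ℂ) *ᵥ (v i)) := by
        rw [← Matrix.mulVecLin_apply, map_sum]
        refine Finset.sum_congr rfl fun i _ => ?_
        rw [LinearMap.map_smul, Matrix.mulVecLin_apply]
      rw [hlin] at happ
      simp only [hEv] at happ
      rw [Finset.sum_eq_single j] at happ
      · rw [if_pos rfl] at happ
        rcases smul_eq_zero.mp happ with h | h
        · exact h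
        · exact absurd h (hwv j)
      · intro i _ hi
        rw [if_neg hi, smul_zero]
      · intro h; exact absurd (Finset.mem_univ _) h
    have hcard := hli.fintype_card_le_finrank
    simpa [Module.finrank_fin_fun] using hcard
  refine ⟨k, hkm, fun i x => ch (g i) x, E, hEpsd, hdecomp, ?_, ?_, ?_, ?_, hstar⟩
  · intro i
    apply hinj (g i)
    rw [hch, _root_.map_one, _root_.map_one]
  · intro i x y
    apply hinj (g i)
    rw [_root_.map_mul, hch, hch, hch, _root_.map_mul]
  · intro i c x
    apply hinj (g i)
    rw [hch]
    rw [← he]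
    rw [hsmulE]
    rw [RingHom.map_mul]
    rw [hch]
    rw [← he]
  · intro i x y
    apply hinj (g i)
    rw [_root_.map_add, hch, hch, hch, _root_.map_add]

/-- Stinespring-type lemma: a positive unital linear map `Φ` from a commutative *-subalgebra
`S` of `M_m(ℂ)` to `M_n(ℂ)` is the compression of a unital *-homomorphism `π` into `M_d(ℂ)`
for some `n ≤ d ≤ n·m` (compression onto the first `n` coordinates). -/
theorem stmt8 {m n : ℕ} (S : StarSubalgebra ℂ (Matrix (Fin m) (Fin m) ℂ))
    (hcomm : ∀ x y : S, x * y = y * x)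
    (Φ : S →ₗ[ℂ] Matrix (Fin n) (Fin n) ℂ)
    (hpos : ∀ x : S, (x : Matrix (Fin m) (Fin m) ℂ).PosSemidef → (Φ x).PosSemidef)
    (hunital : Φ 1 = 1) :
    ∃ d : ℕ, ∃ hd : n ≤ d, d ≤ n * m ∧
      ∃ π : S →⋆ₐ[ℂ] Matrix (Fin d) (Fin d) ℂ,
        ∀ x : S, Φ x = (π x).submatrix (Fin.castLE hd) (Fin.castLE hd) := by
  classical
  rcases Nat.eq_zero_or_pos n with hn | hn
  · subst hn
    refine ⟨0, le_refl 0, Nat.zero_le _,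
      ⟨{ toFun := fun _ => 1, map_one' := rfl,
         map_mul' := fun _ _ => Subsingleton.elim _ _,
         map_zero' := Subsingleton.elim _ _,
         map_add' := fun _ _ => Subsingleton.elim _ _,
         commutes' := fun _ => Subsingleton.elim _ _,
         map_star' := fun _ => Subsingleton.elim _ _ },
       fun _ => Subsingleton.elim _ _⟩⟩
  obtain ⟨k, hkm, χ, E, hEpsd, hdecomp, hχ1, hχmul, hχsmul, hχadd, hχstar⟩ := stepA S hcomm
  -- Φ in terms of the characters
  set A : Fin k → Matrix (Fin n) (Fin n) ℂ := fun i => Φ (E i) with hA_def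
  have hApsd : ∀ i, (A i).PosSemidef := fun i => hpos _ (hEpsd i)
  have hΦ : ∀ x : S, Φ x = ∑ i, χ i x • A i := by
    intro x
    conv_lhs => rw [hdecomp x]
    rw [_root_.map_sum]
    exact Finset.sum_congr rfl fun i _ => by rw [_root_.map_smul]
  have hAsum : (∑ i, A i) = 1 := by
    have h1 := (hΦ 1).symm.trans hunital
    have h2 : ∑ i, χ i 1 • A i = ∑ i, A i :=
      Finset.sum_congr rfl fun i _ => by rw [hχ1 i, one_smul]
    exact h2.symm.trans h1
  have hχ0 : ∀ i, χ i 0 = 0 := by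
    intro i
    have := hχsmul i 0 0
    rwa [zero_smul, zero_mul] at this
  have hk : 0 < k := by
    rcases Nat.eq_zero_or_pos k with h0 | h
    · exfalso
      subst h0
      have h1 := (hΦ 1).symm.trans hunital
      rw [Finset.univ_eq_empty, Finset.sum_empty] at h1
      have h2 := congr_fun (congr_fun h1 ⟨0, hn⟩) ⟨0, hn⟩
      simp [Matrix.one_apply] at h2
    · exact h
  have hd : n ≤ n * k := Nat.le_mul_of_pos_right n hk
  have hdm : n * k ≤ n * m := Nat.mul_le_mul_left n hkm
  set sq : Fin k → Matrix (Fin n) (Fin n) ℂ := fun i => open scoped MatrixOrder in CFC.sqrt (A i) with hsq_def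
  have hsqm : ∀ i, sq i * sq i = A i := fun i => open scoped MatrixOrder in CFC.sqrt_mul_sqrt_self (A i) (hApsd i).nonneg
  have hsqh : ∀ i, (sq i)ᴴ = sq i := fun i => open scoped MatrixOrder in (CFC.sqrt_nonneg (A i)).posSemidef.1
  set ee : Fin (n * k) ≃ Fin n × Fin k := finProdFinEquiv.symm with hee_def
  set W : Matrix (Fin (n * k)) (Fin n) ℂ := fun p a => sq (ee p).2 (ee p).1 a with hW_def
  have hWsum : ∀ (f : Fin k → ℂ) (a c : Fin n),
      (∑ p : Fin (n * k), starRingEnd ℂ (W p a) * (f (ee p).2 * W p c))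
        = ∑ i, f i * A i a c := by
    intro f a c
    rw [← Equiv.sum_comp ee.symm
      (fun p => starRingEnd ℂ (W p a) * (f (ee p).2 * W p c))]
    have hterm : ∀ q : Fin n × Fin k,
        starRingEnd ℂ (W (ee.symm q) a) * (f (ee (ee.symm q)).2 * W (ee.symm q) c)
          = starRingEnd ℂ (sq q.2 q.1 a) * (f q.2 * sq q.2 q.1 c) := by
      intro q
      rw [hW_def]
      simp only [Equiv.apply_symm_apply]
    rw [Finset.sum_congr rfl fun q _ => hterm q]
    rw [Fintype.sum_prod_type]
    rw [Finset.sum_comm]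
    refine Finset.sum_congr rfl fun i _ => ?_
    have : ∑ q1 : Fin n, starRingEnd ℂ (sq i q1 a) * (f i * sq i q1 c)
        = f i * ∑ q1 : Fin n, starRingEnd ℂ (sq i q1 a) * sq i q1 c := by
      rw [Finset.mul_sum]
      exact Finset.sum_congr rfl fun q1 _ => by ring
    rw [this]
    congr 1
    have : ∑ q1 : Fin n, starRingEnd ℂ (sq i q1 a) * sq i q1 c = ((sq i)ᴴ * sq i) a c := by
      rw [mul_apply]
      exact Finset.sum_congr rfl fun q1 _ => by rw [conjTranspose_apply]; rfl
    rw [this, hsqh, hsqm]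
  have hWW : ∀ a c : Fin n, (∑ p, starRingEnd ℂ (W p a) * W p c)
      = (1 : Matrix (Fin n) (Fin n) ℂ) a c := by
    intro a c
    have h0 := hWsum (fun _ => 1) a c
    simp only [one_mul] at h0
    rw [h0, ← Matrix.sum_apply, hAsum]
  set w : Fin n → EuclideanSpace ℂ (Fin (n * k)) :=
    fun a => (WithLp.equiv 2 (Fin (n * k) → ℂ)).symm (fun p => W p a) with hw_def
  have hwapp : ∀ a p, w a p = W p a := fun a p => rfl
  have hinner : ∀ a c, (inner ℂ (w a) (w c) : ℂ) = ∑ p, starRingEnd ℂ (W p a) * W p c := by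
    intro a c
    rw [PiLp.inner_apply]
    refine Finset.sum_congr rfl fun p _ => ?_
    rw [hwapp, hwapp, RCLike.inner_apply]
    exact mul_comm _ _
  set s : Set (Fin (n * k)) := {p | (p : ℕ) < n} with hs_def
  set v : Fin (n * k) → EuclideanSpace ℂ (Fin (n * k)) :=
    fun p => if h : (p : ℕ) < n then w ⟨p, h⟩ else 0 with hv_def
  have hvs : ∀ (p : Fin (n * k)) (h : (p : ℕ) < n), v p = w ⟨p, h⟩ := by
    intro p h
    rw [hv_def]
    exact dif_pos h
  have hortho : Orthonormal ℂ (s.restrict v) := by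
    rw [orthonormal_iff_ite]
    rintro ⟨p, hp⟩ ⟨q, hq⟩
    have hp' : (p : ℕ) < n := hp
    have hq' : (q : ℕ) < n := hq
    show inner ℂ (v p) (v q) = _
    rw [hvs p hp', hvs q hq', hinner, hWW]
    rw [Matrix.one_apply]
    by_cases h : p = q
    · subst h
      rw [if_pos rfl, if_pos rfl]
    · have h1 : ¬((⟨(p : ℕ), hp'⟩ : Fin n) = ⟨(q : ℕ), hq'⟩) :=
        fun hc => h (Fin.ext (by simpa [Fin.ext_iff] using hc))
      have h2 : ¬((⟨p, hp⟩ : s) = ⟨q, hq⟩) := fun hc => h (Subtype.ext_iff.mp hc)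
      rw [if_neg h1, if_neg h2]
  have hcard : Module.finrank ℂ (EuclideanSpace ℂ (Fin (n * k))) = Fintype.card (Fin (n * k)) := by
    simp [finrank_euclideanSpace]
  obtain ⟨b, hb⟩ := hortho.exists_orthonormalBasis_extension_of_card_eq hcard
  have hbw : ∀ a : Fin n, b (Fin.castLE hd a) = w a := by
    intro a
    have hlt : ((Fin.castLE hd a : Fin (n * k)) : ℕ) < n := a.2
    have hmem : (Fin.castLE hd a : Fin (n * k)) ∈ s := hlt
    rw [hb _ hmem, hvs _ hlt]
    congr 1
  set Q : Matrix (Fin (n * k)) (Fin (n * k)) ℂ := fun p q => b q p with hQ_def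
  have hQapp : ∀ p q, Q p q = b q p := fun _ _ => rfl
  have hQc : Qᴴ * Q = 1 := by
    ext p q
    rw [mul_apply, Matrix.one_apply]
    have horth := orthonormal_iff_ite.mp b.orthonormal p q
    rw [PiLp.inner_apply] at horth
    rw [← horth]
    refine Finset.sum_congr rfl fun u _ => ?_
    rw [conjTranspose_apply, hQapp, hQapp, RCLike.inner_apply]
    exact mul_comm _ _
  have hQQ : Q * Qᴴ = 1 := mul_eq_one_comm.mp hQc
  have hQQ' : ∀ M : Matrix (Fin (n * k)) (Fin (n * k)) ℂ, Q * (Qᴴ * M) = M := by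
    intro M
    rw [← Matrix.mul_assoc, hQQ, Matrix.one_mul]
  set ρ : S → Matrix (Fin (n * k)) (Fin (n * k)) ℂ :=
    fun x => Matrix.diagonal (fun p => χ (ee p).2 x) with hρ_def
  have hρmul : ∀ x y, ρ (x * y) = ρ x * ρ y := by
    intro x y
    rw [hρ_def]
    simp only
    rw [diagonal_mul_diagonal]
    exact congrArg _ (funext fun p => hχmul _ x y)
  have hρstar : ∀ x, (ρ x)ᴴ = ρ (star x) := by
    intro x
    rw [hρ_def]
    simp only [diagonal_conjTranspose]
    exact congrArg _ (funext fun p => by rw [Pi.star_apply, hχstar]; rfl)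
  have hρ1 : ρ 1 = 1 := by
    rw [hρ_def]
    simp only
    rw [show (fun p : Fin (n * k) => χ (ee p).2 (1 : S)) = fun _ => (1 : ℂ) from
      funext fun p => hχ1 _, diagonal_one]
  have hρ0 : ρ 0 = 0 := by
    rw [hρ_def]
    simp only
    rw [show (fun p : Fin (n * k) => χ (ee p).2 (0 : S)) = fun _ => (0 : ℂ) from
      funext fun p => hχ0 _, diagonal_zero]
  have hρadd : ∀ x y, ρ (x + y) = ρ x + ρ y := by
    intro x y
    rw [hρ_def]
    simp only
    rw [diagonal_add]
    exact congrArg _ (funext fun p => hχadd _ x y)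
  have hρc : ∀ cc : ℂ, ρ (algebraMap ℂ S cc) = cc • (1 : Matrix (Fin (n * k)) (Fin (n * k)) ℂ) := by
    intro cc
    rw [hρ_def]
    simp only
    rw [show (fun p : Fin (n * k) => χ (ee p).2 (algebraMap ℂ S cc)) = fun _ => cc from
      funext fun p => by rw [Algebra.algebraMap_eq_smul_one, hχsmul, hχ1, mul_one]]
    rw [← Matrix.diagonal_one, ← Matrix.diagonal_smul]
    exact congrArg _ (funext fun p => by simp)
  refine ⟨n * k, hd, hdm,
    ⟨{ toFun := fun x => Qᴴ * ρ x * Q,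
       map_one' := by
         show Qᴴ * ρ 1 * Q = 1
         rw [hρ1, Matrix.mul_one, hQc],
       map_mul' := by
         intro x y
         show Qᴴ * ρ (x * y) * Q = (Qᴴ * ρ x * Q) * (Qᴴ * ρ y * Q)
         rw [hρmul]
         simp only [Matrix.mul_assoc]
         rw [hQQ' (ρ y * Q)],
       map_zero' := by
         show Qᴴ * ρ 0 * Q = 0
         rw [hρ0, Matrix.mul_zero, Matrix.zero_mul],
       map_add' := by
         intro x y
         show Qᴴ * ρ (x + y) * Q = Qᴴ * ρ x * Q + Qᴴ * ρ y * Q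
         rw [hρadd, Matrix.mul_add, Matrix.add_mul],
       commutes' := by
         intro cc
         show Qᴴ * ρ (algebraMap ℂ S cc) * Q = algebraMap ℂ (Matrix (Fin (n * k)) (Fin (n * k)) ℂ) cc
         rw [hρc]
         rw [Matrix.mul_smul, Matrix.mul_one, Matrix.smul_mul, hQc]
         rw [Algebra.algebraMap_eq_smul_one],
       map_star' := by
         intro x
         show Qᴴ * ρ (star x) * Q = star (Qᴴ * ρ x * Q)
         rw [Matrix.star_eq_conjTranspose, conjTranspose_mul, conjTranspose_mul,
           conjTranspose_conjTranspose, hρstar, Matrix.mul_assoc] }, ?_⟩⟩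
  intro x
  ext a c
  rw [submatrix_apply]
  show Φ x a c = (Qᴴ * ρ x * Q) (Fin.castLE hd a) (Fin.castLE hd c)
  have hQW : ∀ (u : Fin (n * k)) (a : Fin n), Q u (Fin.castLE hd a) = W u a := by
    intro u a
    rw [hQapp, hbw, hwapp]
  have hRHS : (Qᴴ * ρ x * Q) (Fin.castLE hd a) (Fin.castLE hd c)
      = ∑ u, starRingEnd ℂ (W u a) * (χ (ee u).2 x * W u c) := by
    rw [Matrix.mul_assoc, mul_apply]
    refine Finset.sum_congr rfl fun u _ => ?_
    rw [conjTranspose_apply, hρ_def]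
    simp only
    rw [diagonal_mul]
    rw [hQW, hQW]
    rfl
  rw [hRHS, hWsum (fun i => χ i x) a c, hΦ x, Matrix.sum_apply]
  refine Finset.sum_congr rfl fun i _ => ?_
  rw [Matrix.smul_apply, smul_eq_mul]
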